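/- Let X and Y be locally compact Hausdorff spaces and let T : C₀(X)⁺ → C₀(Y)⁺ be a bijection satisfying ‖T(f+g)‖ = ‖Tf + Tg‖ for all f, g ∈ C₀(X)⁺. For y ∈ Y set F_y = {f ∈ C₀(X)⁺ : Tf(y) > 0}. Then for each y ∈ Y, the intersection ⋂_{f ∈ F_y} supp(f) consists of exactly one point of X. -/

import Mathlib

open scoped ZeroAtInfty

/-- The positive cone of `C₀(X, ℝ)`. -/
def posCone (X : Type*) [TopologicalSpace X] : Set C₀(X, ℝ) :=
  {f | ∀ x, 0 ≤ f x}

open Filter Set Topology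

namespace Stmt9Aux

variable {α : Type*} [TopologicalSpace α]

lemma apply_le_norm (u : C₀(α, ℝ)) (hu : ∀ z, 0 ≤ u z) (z : α) : u z ≤ ‖u‖ := by
  rw [← ZeroAtInftyContinuousMap.norm_toBCF_eq_norm]
  calc u z ≤ ‖u z‖ := le_abs_self _
  _ ≤ _ := BoundedContinuousFunction.norm_coe_le_norm u.toBCF z

lemma norm_le_of_le (u : C₀(α, ℝ)) {C : ℝ} (hC : 0 ≤ C) (hu : ∀ z, 0 ≤ u z)
    (h : ∀ z, u z ≤ C) : ‖u‖ ≤ C := by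
  rw [← ZeroAtInftyContinuousMap.norm_toBCF_eq_norm]
  refine (BoundedContinuousFunction.norm_le hC).2 (fun z => ?_)
  show |u z| ≤ C
  rw [abs_of_nonneg (hu z)]; exact h z

lemma exists_near_norm [Nonempty α] (u : C₀(α, ℝ)) (hu : ∀ z, 0 ≤ u z) {ε : ℝ}
    (hε : 0 < ε) : ∃ z, ‖u‖ - ε < u z := by
  by_cases hn : ‖u‖ - ε < 0
  · exact ⟨Classical.arbitrary α, lt_of_lt_of_le hn (hu _)⟩
  · by_contra hcon
    push_neg at hcon
    have := norm_le_of_le u (by linarith) hu (fun z => (hcon z))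
    linarith

/-- a bump function at a point inside an open set -/
lemma exists_bump [LocallyCompactSpace α] [T2Space α] (y : α) {V : Set α}
    (hV : IsOpen V) (hy : y ∈ V) :
    ∃ b : C₀(α, ℝ), b y = 1 ∧ (∀ z, 0 ≤ b z) ∧ (∀ z, b z ≤ 1) ∧ (∀ z, z ∉ V → b z = 0)
      ∧ HasCompactSupport ⇑b := by
  obtain ⟨f, h1, h0, hcs, hicc⟩ := exists_continuous_one_zero_of_isCompact
    (isCompact_singleton (x := y)) (hV.isClosed_compl)
    (disjoint_compl_right_iff_subset.mpr (singleton_subset_iff.2 hy))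
  exact ⟨⟨f, hcs.is_zero_at_infty⟩, h1 rfl, fun z => (hicc z).1, fun z => (hicc z).2,
    fun z hz => h0 hz, hcs⟩

noncomputable def minC (f g : C₀(α, ℝ)) : C₀(α, ℝ) :=
  ⟨⟨fun x => min (f x) (g x), (map_continuous f).min (map_continuous g)⟩, by
    have := (zero_at_infty f).min (zero_at_infty g)
    simpa using this⟩

@[simp] lemma minC_apply (f g : C₀(α, ℝ)) (x : α) : minC f g x = min (f x) (g x) := rfl

lemma add_mem_cone {f g : C₀(α, ℝ)} (hf : f ∈ posCone α) (hg : g ∈ posCone α) :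
    f + g ∈ posCone α := fun x => by
  rw [ZeroAtInftyContinuousMap.add_apply]; exact add_nonneg (hf x) (hg x)

lemma zero_mem_cone : (0 : C₀(α, ℝ)) ∈ posCone α := fun x => by
  rw [ZeroAtInftyContinuousMap.zero_apply]

lemma exists_hi (f : C₀(α, ℝ)) {ε : ℝ} (hε : 0 < ε) :
    ∃ h : C₀(α, ℝ), (∀ x, h x = max (f x - ε) 0) ∧ HasCompactSupport ⇑h := by
  have hcont : Continuous (fun x => max (f x - ε) 0) :=
    ((map_continuous f).sub continuous_const).max continuous_const
  have ht : Tendsto (fun x => max (f x - ε) 0) (cocompact α) (𝓝 (max (0 - ε) 0)) :=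
    ((zero_at_infty f).sub tendsto_const_nhds).max tendsto_const_nhds
  have hmax : max ((0:ℝ) - ε) 0 = 0 := max_eq_right (by linarith)
  rw [hmax] at ht
  refine ⟨⟨⟨fun x => max (f x - ε) 0, hcont⟩, ht⟩, fun x => rfl, ?_⟩
  have h1 : ∀ᶠ x in cocompact α, f x ∈ Iio ε := (zero_at_infty f) (Iio_mem_nhds hε)
  rw [Filter.eventually_iff, Filter.mem_cocompact] at h1
  obtain ⟨K, hK, hKsub⟩ := h1
  have hC : IsClosed {x | ε ≤ f x} := isClosed_le continuous_const (map_continuous f)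
  have hCK : {x | ε ≤ f x} ⊆ K := by
    intro x hx
    by_contra hxK
    have hx' : ε ≤ f x := hx
    have := hKsub hxK
    simp only [mem_setOf_eq, mem_Iio] at this
    linarith
  have hsupp : Function.support (fun x => max (f x - ε) 0) ⊆ {x | ε ≤ f x} := by
    intro x hx
    simp only [Function.mem_support] at hx
    by_contra hxC
    simp only [mem_setOf_eq, not_le] at hxC
    exact hx (max_eq_right (by linarith))
  have htsupp : tsupport (fun x => max (f x - ε) 0) ⊆ K :=
    (closure_minimal hsupp hC).trans hCK
  exact IsCompact.of_isClosed_subset hK (isClosed_closure) htsupp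

lemma exists_lo (f : C₀(α, ℝ)) {ε : ℝ} (hε : 0 ≤ ε) :
    ∃ l : C₀(α, ℝ), ∀ x, l x = min (f x) ε := by
  have hcont : Continuous (fun x => min (f x) ε) :=
    (map_continuous f).min continuous_const
  have ht : Tendsto (fun x => min (f x) ε) (cocompact α) (𝓝 (min 0 ε)) :=
    (zero_at_infty f).min tendsto_const_nhds
  rw [min_eq_left hε] at ht
  exact ⟨⟨⟨_, hcont⟩, ht⟩, fun x => rfl⟩

noncomputable def sqrtC (f : C₀(α, ℝ)) : C₀(α, ℝ) :=
  ⟨⟨fun x => Real.sqrt (f x), Real.continuous_sqrt.comp (map_continuous f)⟩, by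
    have := (Real.continuous_sqrt.tendsto 0).comp (zero_at_infty f)
    simpa [Function.comp_def] using this⟩

@[simp] lemma sqrtC_apply (f : C₀(α, ℝ)) (x : α) : sqrtC f x = Real.sqrt (f x) := rfl

lemma aux_sqrt {a : ℝ} (ha : 0 ≤ a) {k : ℕ} (hk : 1 ≤ k) :
    (k : ℝ) * min a (1 / (k : ℝ) ^ 2) ≤ Real.sqrt a := by
  have hk0 : (0 : ℝ) < k := by exact_mod_cast hk
  have hsq : Real.sqrt (1 / (k : ℝ) ^ 2) = 1 / k := by
    rw [one_div, one_div, Real.sqrt_inv, Real.sqrt_sq hk0.le]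
  rcases le_total a (1 / (k : ℝ) ^ 2) with hle | hle
  · rw [min_eq_left hle]
    have hs : Real.sqrt a ≤ 1 / (k : ℝ) := by
      rw [← hsq]; exact Real.sqrt_le_sqrt hle
    have h1 : (k : ℝ) * Real.sqrt a ≤ 1 := by
      have := mul_le_mul_of_nonneg_left hs hk0.le
      rwa [mul_one_div, div_self hk0.ne'] at this
    have h2 : a = Real.sqrt a * Real.sqrt a := (Real.mul_self_sqrt ha).symm
    calc (k : ℝ) * a = ((k : ℝ) * Real.sqrt a) * Real.sqrt a := by rw [mul_assoc, ← h2]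
    _ ≤ 1 * Real.sqrt a := mul_le_mul_of_nonneg_right h1 (Real.sqrt_nonneg a)
    _ = Real.sqrt a := one_mul _
  · rw [min_eq_right hle]
    have h2 : (1 : ℝ) / k ≤ Real.sqrt a := by
      rw [← hsq]; exact Real.sqrt_le_sqrt hle
    calc (k : ℝ) * (1 / (k : ℝ) ^ 2) = 1 / k := by field_simp
    _ ≤ Real.sqrt a := h2

section Main

variable {X Y : Type*} [TopologicalSpace X] [T2Space X] [LocallyCompactSpace X]
  [TopologicalSpace Y] [T2Space Y] [LocallyCompactSpace Y]
  {T : C₀(X, ℝ) → C₀(Y, ℝ)}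

lemma exchange (hnorm : ∀ f ∈ posCone X, ∀ g ∈ posCone X, ‖T (f + g)‖ = ‖T f + T g‖)
    {f g h : C₀(X, ℝ)} (hf : f ∈ posCone X) (hg : g ∈ posCone X) (hh : h ∈ posCone X) :
    ‖T f + T (g + h)‖ = ‖T g + T (f + h)‖ := by
  calc ‖T f + T (g + h)‖ = ‖T (f + (g + h))‖ := (hnorm f hf (g + h) (add_mem_cone hg hh)).symm
    _ = ‖T (g + (f + h))‖ := by rw [add_left_comm]
    _ = ‖T g + T (f + h)‖ := hnorm g hg (f + h) (add_mem_cone hf hh)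

lemma S1 (hbij : Set.BijOn T (posCone X) (posCone Y))
    (hnorm : ∀ f ∈ posCone X, ∀ g ∈ posCone X, ‖T (f + g)‖ = ‖T f + T g‖)
    {g h : C₀(X, ℝ)} (hg : g ∈ posCone X) (hh : h ∈ posCone X) (z : Y) :
    T (g + h) z ≤ ‖T g‖ + T h z := by
  have hTg := hbij.mapsTo hg
  have hTh := hbij.mapsTo hh
  have hTgh := hbij.mapsTo (add_mem_cone hg hh)
  refine le_of_forall_pos_le_add (fun ε hε => ?_)
  set M : ℝ := ‖T h‖ + 1 with hM
  have hM0 : 0 < M := by positivity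
  set V : Set Y := {w : Y | T h w < T h z + ε} with hVdef
  have hVopen : IsOpen V := isOpen_lt (map_continuous (T h)) continuous_const
  have hzV : z ∈ V := by simp only [hVdef, mem_setOf_eq]; linarith
  obtain ⟨b, hb1, hb0, hble, hbV, hbcs⟩ := exists_bump z hVopen hzV
  set φ : C₀(Y, ℝ) := M • b with hφdef
  have hφ_apply : ∀ w, φ w = M * b w := fun w => by
    rw [hφdef, ZeroAtInftyContinuousMap.smul_apply]; rfl
  have hφcone : φ ∈ posCone Y := fun w => by
    rw [hφ_apply]; exact mul_nonneg hM0.le (hb0 w)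
  obtain ⟨r, hr, hTr⟩ := hbij.surjOn hφcone
  have hTr' : T r = φ := hTr
  have e1 : ‖T r + T (g + h)‖ = ‖T g + T (r + h)‖ := exchange hnorm hr hg hh
  have lhs_lb : M + T (g + h) z ≤ ‖T r + T (g + h)‖ := by
    have h1 : (T r + T (g + h)) z = M + T (g + h) z := by
      rw [ZeroAtInftyContinuousMap.add_apply, hTr', hφ_apply, hb1, mul_one]
    rw [← h1]
    exact apply_le_norm _ (fun w => by
      rw [ZeroAtInftyContinuousMap.add_apply]
      exact add_nonneg (hbij.mapsTo hr w) (hTgh w)) z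
  have rhs_ub : ‖T g + T (r + h)‖ ≤ ‖T g‖ + (M + (T h z + ε)) := by
    have h2 : ‖T (r + h)‖ = ‖φ + T h‖ := by rw [← hTr']; exact hnorm r hr h hh
    have h3 : ‖φ + T h‖ ≤ M + (T h z + ε) := by
      refine norm_le_of_le _ (by have := hTh z; linarith) (fun w => by
        rw [ZeroAtInftyContinuousMap.add_apply]
        exact add_nonneg (hφcone w) (hTh w)) (fun w => ?_)
      rw [ZeroAtInftyContinuousMap.add_apply]
      by_cases hw : w ∈ V
      · have h4 : T h w < T h z + ε := hw
        have h5 : φ w ≤ M := by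
          rw [hφ_apply]
          calc M * b w ≤ M * 1 := by nlinarith [hble w, hb0 w]
          _ = M := mul_one M
        linarith
      · have h4 : φ w = 0 := by rw [hφ_apply, hbV w hw, mul_zero]
        have h5 : T h w ≤ ‖T h‖ := apply_le_norm _ hTh w
        have h6 := hTh z
        rw [h4, zero_add, hM]
        linarith
    calc ‖T g + T (r + h)‖ ≤ ‖T g‖ + ‖T (r + h)‖ := norm_add_le _ _
      _ ≤ ‖T g‖ + (M + (T h z + ε)) := by rw [h2]; linarith
  have := e1 ▸ lhs_lb
  linarith [this.trans rhs_ub]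


set_option maxHeartbeats 1000000 in
lemma S2 (hbij : Set.BijOn T (posCone X) (posCone Y))
    (hnorm : ∀ f ∈ posCone X, ∀ g ∈ posCone X, ‖T (f + g)‖ = ‖T f + T g‖)
    {g h : C₀(X, ℝ)} (hg : g ∈ posCone X) (hh : h ∈ posCone X) (z : Y) :
    T g z + T h z ≤ T (g + h) z := by
  have hTg := hbij.mapsTo hg
  have hTh := hbij.mapsTo hh
  have hTgh := hbij.mapsTo (add_mem_cone hg hh)
  haveI : Nonempty Y := ⟨z⟩
  have key : ∀ ε : ℝ, 0 < ε → T g z + T h z ≤ T (g + h) z + 3 * ε := by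
    intro ε hε
    set M : ℝ := ‖T g‖ + ‖T h‖ + ‖T (g + h)‖ + 1 + ε with hM
    have hM0 : 0 < M := by positivity
    set V : Set Y := {w : Y | T g z - ε < T g w ∧ T (g + h) w < T (g + h) z + ε} with hVdef
    have hVopen : IsOpen V := by
      apply IsOpen.inter
      · exact isOpen_lt continuous_const (map_continuous (T g))
      · exact isOpen_lt (map_continuous (T (g + h))) continuous_const
    have hzV : z ∈ V := ⟨by linarith, by linarith⟩
    obtain ⟨b, hb1, hb0, hble, hbV, hbcs⟩ := exists_bump z hVopen hzV
    set φ : C₀(Y, ℝ) := M • b with hφdef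
    have hφ_apply : ∀ w, φ w = M * b w := fun w => by
      rw [hφdef, ZeroAtInftyContinuousMap.smul_apply]; rfl
    have hφcone : φ ∈ posCone Y := fun w => by
      rw [hφ_apply]; exact mul_nonneg hM0.le (hb0 w)
    have hφle : ∀ w, φ w ≤ M := fun w => by
      rw [hφ_apply]
      calc M * b w ≤ M * 1 := by nlinarith [hble w, hb0 w]
      _ = M := mul_one M
    obtain ⟨r, hr, hTr⟩ := hbij.surjOn hφcone
    have hTr' : T r = φ := hTr
    have hrhcone := add_mem_cone hr hh
    have hTrh := hbij.mapsTo hrhcone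
    have hnu : ‖T (r + h)‖ = ‖φ + T h‖ := by rw [← hTr']; exact hnorm r hr h hh
    have hu_lb : M + T h z ≤ ‖T (r + h)‖ := by
      rw [hnu]
      have h1 : (φ + T h) z = M + T h z := by
        rw [ZeroAtInftyContinuousMap.add_apply, hφ_apply, hb1, mul_one]
      rw [← h1]
      exact apply_le_norm _ (fun w => by
        rw [ZeroAtInftyContinuousMap.add_apply]
        exact add_nonneg (hφcone w) (hTh w)) z
    obtain ⟨z₀, hz₀⟩ := exists_near_norm (T (r + h)) hTrh hε
    have hz₀V : z₀ ∈ V := by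
      by_contra hz₀V
      have hb0' : φ z₀ = 0 := by rw [hφ_apply, hbV z₀ hz₀V, mul_zero]
      have h1 : T (h + r) z₀ ≤ ‖T h‖ + T r z₀ := S1 hbij hnorm hh hr z₀
      rw [add_comm h r, hTr', hb0', add_zero] at h1
      have h2 := hTh z
      have h3 := norm_nonneg (T g)
      have h4 := norm_nonneg (T (g + h))
      rw [hM] at hu_lb
      linarith
    have e1 : ‖T r + T (g + h)‖ = ‖T g + T (r + h)‖ := exchange hnorm hr hg hh
    have low : T g z + M + T h z - 2 * ε ≤ ‖T g + T (r + h)‖ := by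
      have h1 : T g z - ε < T g z₀ := hz₀V.1
      have h2 : (T g + T (r + h)) z₀ ≤ ‖T g + T (r + h)‖ :=
        apply_le_norm _ (fun w => by
          rw [ZeroAtInftyContinuousMap.add_apply]
          exact add_nonneg (hTg w) (hTrh w)) z₀
      rw [ZeroAtInftyContinuousMap.add_apply] at h2
      linarith
    have up : ‖T r + T (g + h)‖ ≤ M + (T (g + h) z + ε) := by
      rw [hTr']
      refine norm_le_of_le _ (by have := hTgh z; linarith) (fun w => by
        rw [ZeroAtInftyContinuousMap.add_apply]
        exact add_nonneg (hφcone w) (hTgh w)) (fun w => ?_)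
      rw [ZeroAtInftyContinuousMap.add_apply]
      by_cases hw : w ∈ V
      · have h4 : T (g + h) w < T (g + h) z + ε := hw.2
        have h5 := hφle w
        linarith
      · have h4 : φ w = 0 := by rw [hφ_apply, hbV w hw, mul_zero]
        have h5 : T (g + h) w ≤ ‖T (g + h)‖ := apply_le_norm _ hTgh w
        have h6 := hTgh z
        have h7 := norm_nonneg (T g)
        have h8 := norm_nonneg (T h)
        rw [h4, zero_add, hM]
        linarith
    rw [e1] at up
    linarith
  by_contra hcon
  push_neg at hcon
  have hd : 0 < (T g z + T h z - T (g + h) z) / 6 := by linarith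
  have := key _ hd
  linarith

set_option maxHeartbeats 1000000 in
theorem Tadd (hbij : Set.BijOn T (posCone X) (posCone Y))
    (hnorm : ∀ f ∈ posCone X, ∀ g ∈ posCone X, ‖T (f + g)‖ = ‖T f + T g‖)
    {p q : C₀(X, ℝ)} (hp : p ∈ posCone X) (hq : q ∈ posCone X) :
    T (p + q) = T p + T q := by
  ext y₀
  rw [ZeroAtInftyContinuousMap.add_apply]
  have hTp := hbij.mapsTo hp
  have hTq := hbij.mapsTo hq
  have hpq := add_mem_cone hp hq
  have hTpq := hbij.mapsTo hpq
  refine le_antisymm ?_ (S2 hbij hnorm hp hq y₀)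
  have key : ∀ ε : ℝ, 0 < ε → T (p + q) y₀ ≤ T p y₀ + T q y₀ + 2 * ε := by
    intro ε hε
    set M : ℝ := ‖T p‖ + ‖T q‖ + 1 with hM
    have hM0 : 0 < M := by positivity
    set V : Set Y := {w : Y | T p w < T p y₀ + ε ∧ T q w < T q y₀ + ε} with hVdef
    have hVopen : IsOpen V := by
      apply IsOpen.inter
      · exact isOpen_lt (map_continuous (T p)) continuous_const
      · exact isOpen_lt (map_continuous (T q)) continuous_const
    have hzV : y₀ ∈ V := ⟨by linarith, by linarith⟩
    obtain ⟨b, hb1, hb0, hble, hbV, hbcs⟩ := exists_bump y₀ hVopen hzV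
    set φ : C₀(Y, ℝ) := M • b with hφdef
    have hφ_apply : ∀ w, φ w = M * b w := fun w => by
      rw [hφdef, ZeroAtInftyContinuousMap.smul_apply]; rfl
    have hφcone : φ ∈ posCone Y := fun w => by
      rw [hφ_apply]; exact mul_nonneg hM0.le (hb0 w)
    have hφle : ∀ w, φ w ≤ M := fun w => by
      rw [hφ_apply]
      calc M * b w ≤ M * 1 := by nlinarith [hble w, hb0 w]
      _ = M := mul_one M
    obtain ⟨r, hr, hTr⟩ := hbij.surjOn hφcone
    have hTr' : T r = φ := hTr
    have hqrcone := add_mem_cone hq hr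
    have hTqr := hbij.mapsTo hqrcone
    have n2 : ‖T (q + r)‖ ≤ M + (T q y₀ + ε) := by
      rw [hnorm q hq r hr, hTr']
      refine norm_le_of_le _ (by have := hTq y₀; linarith) (fun w => by
        rw [ZeroAtInftyContinuousMap.add_apply]
        exact add_nonneg (hTq w) (hφcone w)) (fun w => ?_)
      rw [ZeroAtInftyContinuousMap.add_apply]
      by_cases hw : w ∈ V
      · have h4 : T q w < T q y₀ + ε := hw.2
        have h5 := hφle w
        linarith
      · have h4 : φ w = 0 := by rw [hφ_apply, hbV w hw, mul_zero]
        have h5 : T q w ≤ ‖T q‖ := apply_le_norm _ hTq w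
        have h6 := hTq y₀
        have h7 := norm_nonneg (T p)
        rw [h4, add_zero, hM]
        linarith
    have n3 : ∀ w, T (q + r) w ≤ ‖T q‖ + φ w := fun w => by
      have := S1 hbij hnorm hq hr w
      rwa [hTr'] at this
    have A_ub : ‖T p + T (q + r)‖ ≤ M + (T p y₀ + T q y₀ + 2 * ε) := by
      refine norm_le_of_le _ (by have h1 := hTp y₀; have h2 := hTq y₀; linarith)
        (fun w => by
          rw [ZeroAtInftyContinuousMap.add_apply]
          exact add_nonneg (hTp w) (hTqr w)) (fun w => ?_)
      rw [ZeroAtInftyContinuousMap.add_apply]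
      by_cases hw : w ∈ V
      · have h4 : T p w < T p y₀ + ε := hw.1
        have h5 : T (q + r) w ≤ ‖T (q + r)‖ := apply_le_norm _ hTqr w
        linarith
      · have h4 : φ w = 0 := by rw [hφ_apply, hbV w hw, mul_zero]
        have h5 := n3 w
        rw [h4, add_zero] at h5
        have h6 : T p w ≤ ‖T p‖ := apply_le_norm _ hTp w
        have h7 := hTp y₀
        have h8 := hTq y₀
        rw [hM]
        linarith
    have low : T (p + q) y₀ + M ≤ ‖T p + T (q + r)‖ := by
      have s2 := S2 hbij hnorm hpq hr y₀
      have h1 : T ((p + q) + r) y₀ ≤ ‖T ((p + q) + r)‖ :=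
        apply_le_norm _ (hbij.mapsTo (add_mem_cone hpq hr)) y₀
      have e : ‖T ((p + q) + r)‖ = ‖T p + T (q + r)‖ := by
        rw [add_assoc]; exact hnorm p hp (q + r) hqrcone
      have hry : T r y₀ = M := by rw [hTr', hφ_apply, hb1, mul_one]
      rw [e] at h1
      rw [hry] at s2
      linarith
    linarith
  by_contra hcon
  push_neg at hcon
  have hd : 0 < (T (p + q) y₀ - (T p y₀ + T q y₀)) / 4 := by linarith
  have := key _ hd
  linarith


lemma T0 (hbij : Set.BijOn T (posCone X) (posCone Y))
    (hnorm : ∀ f ∈ posCone X, ∀ g ∈ posCone X, ‖T (f + g)‖ = ‖T f + T g‖) :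
    T 0 = 0 := by
  have h := Tadd hbij hnorm zero_mem_cone zero_mem_cone
  rw [add_zero] at h
  exact (left_eq_add.mp h)

lemma Tmono (hbij : Set.BijOn T (posCone X) (posCone Y))
    (hnorm : ∀ f ∈ posCone X, ∀ g ∈ posCone X, ‖T (f + g)‖ = ‖T f + T g‖)
    {a b : C₀(X, ℝ)} (ha : a ∈ posCone X) (hb : b ∈ posCone X)
    (hab : ∀ x, a x ≤ b x) (z : Y) : T a z ≤ T b z := by
  set d : C₀(X, ℝ) := b - a with hd
  have hdcone : d ∈ posCone X := fun x => by
    rw [hd, ZeroAtInftyContinuousMap.sub_apply]; linarith [hab x]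
  have hsum : a + d = b := by
    ext x
    rw [ZeroAtInftyContinuousMap.add_apply, hd, ZeroAtInftyContinuousMap.sub_apply]
    ring
  have := Tadd hbij hnorm ha hdcone
  rw [hsum] at this
  rw [this, ZeroAtInftyContinuousMap.add_apply]
  exact le_add_of_nonneg_right (hbij.mapsTo hdcone z)

lemma Treflect (hbij : Set.BijOn T (posCone X) (posCone Y))
    (hnorm : ∀ f ∈ posCone X, ∀ g ∈ posCone X, ‖T (f + g)‖ = ‖T f + T g‖)
    {a b : C₀(X, ℝ)} (ha : a ∈ posCone X) (hb : b ∈ posCone X)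
    (hab : ∀ z, T a z ≤ T b z) (x : X) : a x ≤ b x := by
  have hTa := hbij.mapsTo ha
  set w : C₀(Y, ℝ) := T b - T a with hw
  have hwcone : w ∈ posCone Y := fun z => by
    rw [hw, ZeroAtInftyContinuousMap.sub_apply]; linarith [hab z]
  obtain ⟨c, hc, hTc⟩ := hbij.surjOn hwcone
  have hTc' : T c = w := hTc
  have h1 : T (a + c) = T b := by
    rw [Tadd hbij hnorm ha hc, hTc', hw]
    ext z
    rw [ZeroAtInftyContinuousMap.add_apply, ZeroAtInftyContinuousMap.sub_apply]
    ring
  have h2 : a + c = b := hbij.injOn (add_mem_cone ha hc) hb h1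
  rw [← h2, ZeroAtInftyContinuousMap.add_apply]
  exact le_add_of_nonneg_right (hc x)

lemma minC_mem_cone {f g : C₀(X, ℝ)} (hf : f ∈ posCone X) (hg : g ∈ posCone X) :
    minC f g ∈ posCone X := fun x => by
  rw [minC_apply]; exact le_min (hf x) (hg x)

lemma Tmin_lb (hbij : Set.BijOn T (posCone X) (posCone Y))
    (hnorm : ∀ f ∈ posCone X, ∀ g ∈ posCone X, ‖T (f + g)‖ = ‖T f + T g‖)
    {f g : C₀(X, ℝ)} (hf : f ∈ posCone X) (hg : g ∈ posCone X) (z : Y) :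
    min (T f z) (T g z) ≤ T (minC f g) z := by
  set w : C₀(Y, ℝ) := minC (T f) (T g) with hw
  have hwcone : w ∈ posCone Y := minC_mem_cone (hbij.mapsTo hf) (hbij.mapsTo hg)
  obtain ⟨c, hc, hTc⟩ := hbij.surjOn hwcone
  have hTc' : T c = w := hTc
  have hcf : ∀ x, c x ≤ f x := Treflect hbij hnorm hc hf (fun z' => by
    rw [hTc', hw, minC_apply]; exact min_le_left _ _)
  have hcg : ∀ x, c x ≤ g x := Treflect hbij hnorm hc hg (fun z' => by
    rw [hTc', hw, minC_apply]; exact min_le_right _ _)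
  have hcm : ∀ x, c x ≤ minC f g x := fun x => by
    rw [minC_apply]; exact le_min (hcf x) (hcg x)
  have := Tmono hbij hnorm hc (minC_mem_cone hf hg) hcm z
  rw [hTc', hw, minC_apply] at this
  exact this

/-- natural multiples -/
lemma Tnsmul (hbij : Set.BijOn T (posCone X) (posCone Y))
    (hnorm : ∀ f ∈ posCone X, ∀ g ∈ posCone X, ‖T (f + g)‖ = ‖T f + T g‖)
    {f : C₀(X, ℝ)} (hf : f ∈ posCone X) (k : ℕ) :
    ∃ m : C₀(X, ℝ), m ∈ posCone X ∧ (∀ x, m x = k * f x) ∧ (∀ z, T m z = k * T f z) := by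
  induction k with
  | zero => exact ⟨0, zero_mem_cone, fun x => by
      rw [ZeroAtInftyContinuousMap.zero_apply]; simp, fun z => by
      rw [T0 hbij hnorm, ZeroAtInftyContinuousMap.zero_apply]; simp⟩
  | succ k ih =>
    obtain ⟨m, hm, hmx, hmz⟩ := ih
    refine ⟨m + f, add_mem_cone hm hf, fun x => ?_, fun z => ?_⟩
    · rw [ZeroAtInftyContinuousMap.add_apply, hmx x]
      push_cast; ring
    · rw [Tadd hbij hnorm hm hf, ZeroAtInftyContinuousMap.add_apply, hmz z]
      push_cast; ring


lemma exists_compact_member (hbij : Set.BijOn T (posCone X) (posCone Y))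
    (hnorm : ∀ f ∈ posCone X, ∀ g ∈ posCone X, ‖T (f + g)‖ = ‖T f + T g‖)
    {f₀ : C₀(X, ℝ)} (hf₀ : f₀ ∈ posCone X) {y : Y} (hpos : 0 < T f₀ y) :
    ∃ fs : C₀(X, ℝ), fs ∈ posCone X ∧ HasCompactSupport ⇑fs ∧ 0 < T fs y := by
  by_contra hcon
  push_neg at hcon
  have key : ∀ ε : ℝ, 0 < ε → ∃ l : C₀(X, ℝ), l ∈ posCone X ∧ (∀ x, l x = min (f₀ x) ε)
      ∧ T l y = T f₀ y := by
    intro ε hε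
    obtain ⟨hi, hhix, hhics⟩ := exists_hi f₀ hε
    obtain ⟨lo, hlox⟩ := exists_lo f₀ hε.le
    have hicone : hi ∈ posCone X := fun x => by rw [hhix x]; exact le_max_right _ _
    have hlocone : lo ∈ posCone X := fun x => by
      rw [hlox x]; exact le_min (hf₀ x) hε.le
    have hsum : hi + lo = f₀ := by
      ext x
      rw [ZeroAtInftyContinuousMap.add_apply, hhix x, hlox x]
      rcases le_total (f₀ x) ε with h | h
      · rw [max_eq_right (by linarith), min_eq_left h]; ring
      · rw [max_eq_left (by linarith), min_eq_right h]; ring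
    have hTval : T f₀ y = T hi y + T lo y := by
      rw [← hsum, Tadd hbij hnorm hicone hlocone, ZeroAtInftyContinuousMap.add_apply]
    have hhiy : T hi y = 0 :=
      le_antisymm (hcon hi hicone hhics) (hbij.mapsTo hicone y)
    exact ⟨lo, hlocone, hlox, by linarith⟩
  have hscone : sqrtC f₀ ∈ posCone X := fun x => by
    rw [sqrtC_apply]; exact Real.sqrt_nonneg _
  have bound : ∀ k : ℕ, 1 ≤ k → (k : ℝ) * T f₀ y ≤ T (sqrtC f₀) y := by
    intro k hk
    have hk2 : (0 : ℝ) < 1 / (k : ℝ) ^ 2 := by positivity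
    obtain ⟨l, hl, hlx, hly⟩ := key _ hk2
    obtain ⟨m, hm, hmx, hmy⟩ := Tnsmul hbij hnorm hl k
    have hms : ∀ x, m x ≤ sqrtC f₀ x := fun x => by
      rw [hmx x, hlx x, sqrtC_apply]; exact aux_sqrt (hf₀ x) hk
    have := Tmono hbij hnorm hm hscone hms y
    rw [hmy y, hly] at this
    exact this
  obtain ⟨k, hk⟩ := exists_nat_gt (T (sqrtC f₀) y / T f₀ y)
  have hk1 : 1 ≤ k := by
    by_contra hk1
    interval_cases k
    · simp only [Nat.cast_zero] at hk
      have : (0:ℝ) ≤ T (sqrtC f₀) y / T f₀ y :=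
        div_nonneg (hbij.mapsTo hscone y) hpos.le
      linarith
  have h1 := bound k hk1
  have h2 : T (sqrtC f₀) y < k * T f₀ y := by
    rw [div_lt_iff₀ hpos] at hk
    linarith
  linarith

end Main
end Stmt9Aux

set_option maxHeartbeats 1000000 in
/-- **Lemma 2.10.** Let `T` be a norm additive bijection between positive cones. For
each `y ∈ Y`, the intersection `⋂_{f ∈ F_y} supp(f)`, where
`F_y = {f ∈ C₀(X)⁺ : Tf(y) > 0}`, consists of exactly one point. -/
theorem stmt9 {X Y : Type*} [TopologicalSpace X] [T2Space X] [LocallyCompactSpace X]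
    [TopologicalSpace Y] [T2Space Y] [LocallyCompactSpace Y]
    (T : C₀(X, ℝ) → C₀(Y, ℝ))
    (hbij : Set.BijOn T (posCone X) (posCone Y))
    (hnorm : ∀ f ∈ posCone X, ∀ g ∈ posCone X, ‖T (f + g)‖ = ‖T f + T g‖) :
    ∀ y : Y, ∃ x : X,
      (⋂ f ∈ {g : C₀(X, ℝ) | g ∈ posCone X ∧ 0 < T g y}, tsupport (⇑f : X → ℝ))
        = {x} := by
  intro y
  classical
  -- a member of the family
  obtain ⟨b₀, hb₀1, hb₀0, _, _, hb₀cs⟩ := Stmt9Aux.exists_bump y isOpen_univ (mem_univ y)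
  have hb₀cone : b₀ ∈ posCone Y := hb₀0
  obtain ⟨f₀, hf₀, hTf₀⟩ := hbij.surjOn hb₀cone
  have hTf₀' : T f₀ = b₀ := hTf₀
  have hf₀pos : 0 < T f₀ y := by rw [hTf₀', hb₀1]; norm_num
  -- a member with compact support
  obtain ⟨fs, hfs, hfscs, hfspos⟩ := Stmt9Aux.exists_compact_member hbij hnorm hf₀ hf₀pos
  -- finite intersection property
  have fip : ∀ t : Finset {f : C₀(X, ℝ) // f ∈ posCone X ∧ 0 < T f y},
      ∃ m : C₀(X, ℝ), m ∈ posCone X ∧ 0 < T m y ∧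
      (∀ x, m x ≤ fs x) ∧ (∀ i ∈ t, ∀ x, m x ≤ (i : C₀(X, ℝ)) x) := by
    intro t
    induction t using Finset.induction_on with
    | empty => exact ⟨fs, hfs, hfspos, fun x => le_refl _, by simp⟩
    | @insert i t hit ih =>
      obtain ⟨m, hm, hmpos, hmfs, hmt⟩ := ih
      refine ⟨Stmt9Aux.minC m i, Stmt9Aux.minC_mem_cone hm i.2.1, ?_, ?_, ?_⟩
      · have h1 : 0 < min (T m y) (T (i : C₀(X, ℝ)) y) := lt_min hmpos i.2.2
        exact h1.trans_le (Stmt9Aux.Tmin_lb hbij hnorm hm i.2.1 y)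
      · intro x
        rw [Stmt9Aux.minC_apply]
        exact (min_le_left _ _).trans (hmfs x)
      · intro j hj x
        rw [Stmt9Aux.minC_apply]
        rcases Finset.mem_insert.mp hj with h | h
        · rw [h]; exact min_le_right _ _
        · exact (min_le_left _ _).trans (hmt j h x)
  -- nonempty intersection
  have hK : IsCompact (tsupport ⇑fs) := hfscs
  have hne : (tsupport ⇑fs ∩
      ⋂ i : {f : C₀(X, ℝ) // f ∈ posCone X ∧ 0 < T f y},
        tsupport ⇑(i : C₀(X, ℝ))).Nonempty := by
    by_contra hcon
    rw [Set.not_nonempty_iff_eq_empty] at hcon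
    obtain ⟨t, ht⟩ := hK.elim_finite_subfamily_closed _
      (fun i : {f : C₀(X, ℝ) // f ∈ posCone X ∧ 0 < T f y} => isClosed_tsupport ⇑(i : C₀(X, ℝ))) hcon
    obtain ⟨m, hm, hmpos, hmfs, hmt⟩ := fip t
    have hm0 : m ≠ 0 := by
      intro h0
      rw [h0, Stmt9Aux.T0 hbij hnorm] at hmpos
      simp only [ZeroAtInftyContinuousMap.zero_apply, lt_self_iff_false] at hmpos
    obtain ⟨x, hx⟩ : ∃ x, m x ≠ 0 := by
      by_contra hall
      push_neg at hall
      exact hm0 (ZeroAtInftyContinuousMap.ext fun x => by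
        rw [hall x, ZeroAtInftyContinuousMap.zero_apply])
    have hmx : 0 < m x := lt_of_le_of_ne (hm x) (Ne.symm hx)
    have hxfs : x ∈ tsupport ⇑fs := subset_tsupport _ (by
      simp only [Function.mem_support]
      intro h0
      have := hmfs x
      rw [h0] at this
      linarith)
    have hxt : x ∈ ⋂ i ∈ t, tsupport ⇑(i : C₀(X, ℝ)) := by
      refine mem_iInter₂.mpr (fun i hi => subset_tsupport _ ?_)
      simp only [Function.mem_support]
      intro h0
      have := hmt i hi x
      rw [h0] at this
      linarith
    rw [Set.eq_empty_iff_forall_notMem] at ht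
    exact ht x ⟨hxfs, hxt⟩
  obtain ⟨x0, _, hx0I⟩ := hne
  rw [mem_iInter] at hx0I
  -- uniqueness
  have huniq : ∀ x₁ x₂ : X,
      (∀ i : {f : C₀(X, ℝ) // f ∈ posCone X ∧ 0 < T f y}, x₁ ∈ tsupport ⇑(i : C₀(X, ℝ))) →
      (∀ i : {f : C₀(X, ℝ) // f ∈ posCone X ∧ 0 < T f y}, x₂ ∈ tsupport ⇑(i : C₀(X, ℝ))) →
      x₁ = x₂ := by
    intro x₁ x₂ h1 h2
    by_contra hne12
    obtain ⟨U₁, U₂, hU₁, hU₂, hx₁U, hx₂U, hdisj⟩ := t2_separation hne12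
    obtain ⟨K₂, hK₂c, hx₂K, hK₂U⟩ := exists_compact_subset hU₂ hx₂U
    obtain ⟨χ, hχ1, hχ0, hχcs, hχicc⟩ := exists_continuous_one_zero_of_isCompact hK₂c
      hU₂.isClosed_compl (disjoint_compl_right_iff_subset.mpr hK₂U)
    have hacont : Continuous fun x => f₀ x * χ x :=
      (map_continuous f₀).mul (map_continuous χ)
    have hatend : Tendsto (fun x => f₀ x * χ x) (cocompact X) (𝓝 0) := by
      refine tendsto_of_tendsto_of_tendsto_of_le_of_le tendsto_const_nhds (zero_at_infty f₀)
        (fun x => mul_nonneg (hf₀ x) (hχicc x).1)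
        (fun x => mul_le_of_le_one_right (hf₀ x) (hχicc x).2)
    have hbcont : Continuous fun x => f₀ x * (1 - χ x) :=
      (map_continuous f₀).mul (continuous_const.sub (map_continuous χ))
    have hbtend : Tendsto (fun x => f₀ x * (1 - χ x)) (cocompact X) (𝓝 0) := by
      refine tendsto_of_tendsto_of_tendsto_of_le_of_le tendsto_const_nhds (zero_at_infty f₀)
        (fun x => mul_nonneg (hf₀ x) (by linarith [(hχicc x).2]))
        (fun x => mul_le_of_le_one_right (hf₀ x) (by linarith [(hχicc x).1]))
    set a : C₀(X, ℝ) := ⟨⟨fun x => f₀ x * χ x, hacont⟩, hatend⟩ with ha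
    set bb : C₀(X, ℝ) := ⟨⟨fun x => f₀ x * (1 - χ x), hbcont⟩, hbtend⟩ with hbb
    have haapp : ∀ x, a x = f₀ x * χ x := fun x => rfl
    have hbbapp : ∀ x, bb x = f₀ x * (1 - χ x) := fun x => rfl
    have hacone : a ∈ posCone X := fun x => mul_nonneg (hf₀ x) (hχicc x).1
    have hbbcone : bb ∈ posCone X := fun x =>
      mul_nonneg (hf₀ x) (by linarith [(hχicc x).2])
    have hab : a + bb = f₀ := by
      ext x
      rw [ZeroAtInftyContinuousMap.add_apply, haapp, hbbapp]
      ring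
    have hsplit : T f₀ y = T a y + T bb y := by
      rw [← hab, Stmt9Aux.Tadd hbij hnorm hacone hbbcone,
        ZeroAtInftyContinuousMap.add_apply]
    have hcases : 0 < T a y ∨ 0 < T bb y := by
      by_contra hno
      push_neg at hno
      have ha0 : T a y = 0 := le_antisymm hno.1 (hbij.mapsTo hacone y)
      have hb0 : T bb y = 0 := le_antisymm hno.2 (hbij.mapsTo hbbcone y)
      rw [ha0, hb0, add_zero] at hsplit
      linarith
    rcases hcases with hpa | hpb
    · have hi : x₁ ∈ tsupport ⇑a := h1 ⟨a, hacone, hpa⟩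
      have hsup : Function.support ⇑a ⊆ U₂ := by
        intro x hx
        by_contra hxU2
        refine hx ?_
        rw [haapp, hχ0 hxU2]
        simp
      have hx₁cl : x₁ ∈ closure U₂ := (closure_mono hsup) hi
      obtain ⟨w, hw1, hw2⟩ := mem_closure_iff.mp hx₁cl U₁ hU₁ hx₁U
      exact (Set.disjoint_left.mp hdisj hw1) hw2
    · have hi : x₂ ∈ tsupport ⇑bb := h2 ⟨bb, hbbcone, hpb⟩
      obtain ⟨w, hwint, hwsup⟩ := mem_closure_iff.mp hi (interior K₂) isOpen_interior hx₂K
      refine hwsup ?_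
      rw [hbbapp, hχ1 (interior_subset hwint)]
      simp
  -- conclusion
  refine ⟨x0, ?_⟩
  apply Set.eq_singleton_iff_unique_mem.mpr
  constructor
  · exact mem_iInter₂.mpr (fun f hf => hx0I ⟨f, hf.1, hf.2⟩)
  · intro z hz
    rw [mem_iInter₂] at hz
    exact huniq z x0 (fun i => hz i.1 ⟨i.2.1, i.2.2⟩) (fun i => hx0I i)
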